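/- Let $M, N$ be weight sequences with $\mu_k \le \nu_k$ for all $k$ (where $\mu_k = M_k/M_{k-1}$, $\nu_k = N_k/N_{k-1}$), satisfying: there is $C > 0$ with $\sum_{\ell \ge k} 1/\nu_\ell \le C k/\mu_k$ for all $k \ge 1$. Then there exists $C' > 0$ such that $\int_1^\infty \frac{\omega_N(tu)}{u^2}\, du \le C' \omega_M(t) + C'$ for all $t > 0$, where $\omega_M(t) = \sup_k \log(t^k/M_k)$ and similarly for $\omega_N$. -/

import Mathlib

open Filter MeasureTheory Set Topology

lemma aux_core (a c : ℝ) (ha : 0 < a) (hc : 1 ≤ c) (hac : 1 ≤ a * c) :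
    IntegrableOn (fun u => Real.log (a * u) / u ^ 2) (Set.Ioi c) ∧
    ∫ u in Set.Ioi c, Real.log (a * u) / u ^ 2 = (Real.log (a * c) + 1) / c := by
  have hc0 : (0:ℝ) < c := lt_of_lt_of_le one_pos hc
  set F : ℝ → ℝ := fun u => -(Real.log (a * u) + 1) / u with hF
  have hderiv : ∀ u ∈ Set.Ici c, HasDerivAt F (Real.log (a * u) / u ^ 2) u := by
    intro u hu
    have hu0 : 0 < u := lt_of_lt_of_le hc0 hu
    have hau : a * u ≠ 0 := by positivity
    have h1 : HasDerivAt (fun x : ℝ => a * x) a u := by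
      simpa using (hasDerivAt_id u).const_mul a
    have h2 : HasDerivAt (fun x : ℝ => Real.log (a * x)) ((a * u)⁻¹ * a) u :=
      (Real.hasDerivAt_log hau).comp u h1
    have h3 : HasDerivAt (fun x : ℝ => -(Real.log (a * x) + 1)) (-((a * u)⁻¹ * a)) u :=
      (h2.add_const 1).neg
    have h4 : HasDerivAt F ((-((a * u)⁻¹ * a) * u - -(Real.log (a * u) + 1) * 1) / u ^ 2) u :=
      h3.div (hasDerivAt_id u) (ne_of_gt hu0)
    convert h4 using 1
    field_simp
    ring
  have h0 : ∀ u ∈ Set.Ioi c, 0 ≤ Real.log (a * u) / u ^ 2 := by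
    intro u hu
    have hu0 : 0 < u := lt_of_lt_of_le hc0 (le_of_lt hu)
    have : (1:ℝ) ≤ a * u := le_trans hac (by nlinarith [hu.out])
    have := Real.log_nonneg this
    positivity
  have htend : Tendsto F atTop (𝓝 0) := by
    have hlim : Tendsto (fun u : ℝ => -(Real.log a * u⁻¹ + Real.log u / u + u⁻¹)) atTop (𝓝 0) := by
      have l1 : Tendsto (fun u : ℝ => Real.log a * u⁻¹) atTop (𝓝 0) := by
        simpa using (tendsto_inv_atTop_zero (𝕜 := ℝ)).const_mul (Real.log a)
      have l2 : Tendsto (fun u : ℝ => Real.log u / u) atTop (𝓝 0) := by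
        have := Real.tendsto_pow_log_div_mul_add_atTop 1 0 1 one_ne_zero
        simpa using this
      have l3 : Tendsto (fun u : ℝ => u⁻¹) atTop (𝓝 (0:ℝ)) := tendsto_inv_atTop_zero
      have := ((l1.add l2).add l3).neg
      simpa using this
    refine hlim.congr' ?_
    filter_upwards [eventually_gt_atTop (0:ℝ)] with u hu
    have : Real.log (a * u) = Real.log a + Real.log u := Real.log_mul (ne_of_gt ha) (ne_of_gt hu)
    simp only [hF, this]
    field_simp
  refine ⟨integrableOn_Ioi_deriv_of_nonneg' hderiv h0 htend, ?_⟩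
  rw [integral_Ioi_of_hasDerivAt_of_nonneg' hderiv h0 htend]
  simp only [hF]
  field_simp
  ring

lemma aux1 (a : ℝ) (ha : 0 < a) :
    IntegrableOn (fun u => max 0 (Real.log (a * u)) / u ^ 2) (Set.Ioi 1) ∧
    ∫ u in Set.Ioi 1, max 0 (Real.log (a * u)) / u ^ 2 ≤ max 0 (Real.log a) + min 1 a := by
  rcases le_or_gt 1 a with h1a | h1a
  · have core := aux_core a 1 ha le_rfl (by simpa using h1a)
    have heq : Set.EqOn (fun u => Real.log (a * u) / u ^ 2)
        (fun u => max 0 (Real.log (a * u)) / u ^ 2) (Set.Ioi 1) := by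
      intro u hu
      have : (1:ℝ) ≤ a * u := by nlinarith [hu.out]
      simp only [max_eq_right (Real.log_nonneg this)]
    constructor
    · exact core.1.congr_fun heq measurableSet_Ioi
    · rw [← setIntegral_congr_fun measurableSet_Ioi heq, core.2]
      rw [max_eq_right (Real.log_nonneg h1a), min_eq_left h1a]
      simp
  · set c := a⁻¹ with hcdef
    have hc : 1 < c := one_lt_inv₀ ha |>.2 h1a
    have hac : a * c = 1 := mul_inv_cancel₀ (ne_of_gt ha)
    have core := aux_core a c ha hc.le (by rw [hac])
    have heq2 : Set.EqOn (fun u => Real.log (a * u) / u ^ 2)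
        (fun u => max 0 (Real.log (a * u)) / u ^ 2) (Set.Ioi c) := by
      intro u hu
      have hau : (1:ℝ) ≤ a * u := by
        have : c ≤ u := (hu.out).le
        nlinarith
      simp only [max_eq_right (Real.log_nonneg hau)]
    have heq1 : Set.EqOn (fun _ : ℝ => (0:ℝ))
        (fun u => max 0 (Real.log (a * u)) / u ^ 2) (Set.Ioc 1 c) := by
      intro u hu
      have hu0 : (0:ℝ) < u := lt_trans one_pos hu.1
      have hau : a * u ≤ 1 := by
        have : u ≤ c := hu.2
        calc a * u ≤ a * c := by nlinarith
        _ = 1 := hac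
      have : Real.log (a * u) ≤ 0 := Real.log_nonpos (by positivity) hau
      simp only [max_eq_left this, zero_div]
    have hint1 : IntegrableOn (fun u => max 0 (Real.log (a * u)) / u ^ 2) (Set.Ioc 1 c) :=
      (integrableOn_zero).congr_fun heq1 measurableSet_Ioc
    have hint2 : IntegrableOn (fun u => max 0 (Real.log (a * u)) / u ^ 2) (Set.Ioi c) :=
      core.1.congr_fun heq2 measurableSet_Ioi
    have hsplit : Set.Ioc (1:ℝ) c ∪ Set.Ioi c = Set.Ioi 1 := Set.Ioc_union_Ioi_eq_Ioi hc.le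
    constructor
    · rw [← hsplit]
      exact hint1.union hint2
    · rw [← hsplit, setIntegral_union Set.Ioc_disjoint_Ioi_same measurableSet_Ioi hint1 hint2]
      have e1 : ∫ u in Set.Ioc (1:ℝ) c, max 0 (Real.log (a * u)) / u ^ 2 = 0 := by
        rw [← setIntegral_congr_fun measurableSet_Ioc heq1]
        simp
      have e2 : ∫ u in Set.Ioi c, max 0 (Real.log (a * u)) / u ^ 2 = (Real.log (a * c) + 1) / c := by
        rw [← setIntegral_congr_fun measurableSet_Ioi heq2, core.2]
      rw [e1, e2, hac, Real.log_one, zero_add]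
      have : max 0 (Real.log a) = 0 := max_eq_left (Real.log_nonpos ha.le h1a.le)
      rw [this, min_eq_right h1a.le, hcdef]
      rw [zero_add, one_div, inv_inv, zero_add]

lemma aux_invsq (b : ℝ) (hb : 0 < b) :
    (∫⁻ u in Set.Ioi b, ENNReal.ofReal (1 / u ^ 2)) = ENNReal.ofReal (1 / b) := by
  have heq : Set.EqOn (fun u : ℝ => u ^ (-2 : ℝ)) (fun u : ℝ => 1 / u ^ 2) (Set.Ioi b) := by
    intro u hu
    have hu0 : 0 < u := lt_trans hb hu
    show u ^ (-2:ℝ) = 1 / u ^ 2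
    rw [Real.rpow_neg hu0.le, one_div, ← Real.rpow_natCast u 2]
    norm_num
  have hint : IntegrableOn (fun u : ℝ => 1 / u ^ 2) (Set.Ioi b) :=
    (integrableOn_Ioi_rpow_of_lt (by norm_num) hb).congr_fun heq measurableSet_Ioi
  have hval : ∫ u in Set.Ioi b, 1 / u ^ 2 = 1 / b := by
    rw [← setIntegral_congr_fun measurableSet_Ioi heq, integral_Ioi_rpow_of_lt (by norm_num) hb]
    show -b ^ (-2+1:ℝ) / (-2+1) = 1/b
    norm_num
    exact Real.rpow_neg_one b
  rw [← hval]
  rw [← ofReal_integral_eq_lintegral_ofReal hint]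
  exact Filter.Eventually.of_forall fun u => by positivity

theorem stmt18 (M N : ℕ → ℝ) (hMpos : ∀ k, 0 < M k) (hNpos : ∀ k, 0 < N k)
    (hM0 : M 0 = 1) (hN0 : N 0 = 1)
    (hMlc : ∀ k : ℕ, 1 ≤ k → M k / M (k - 1) ≤ M (k + 1) / M k)
    (hNlc : ∀ k : ℕ, 1 ≤ k → N k / N (k - 1) ≤ N (k + 1) / N k)
    (hMroot : Tendsto (fun k => M k ^ (1 / (k : ℝ))) atTop atTop)
    (hNroot : Tendsto (fun k => N k ^ (1 / (k : ℝ))) atTop atTop)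
    (hμν : ∀ k : ℕ, 1 ≤ k → M k / M (k - 1) ≤ N k / N (k - 1))
    (C : ℝ) (hC : 0 < C)
    (htail : ∀ k : ℕ, 1 ≤ k → (∑' j : ℕ, 1 / (N (k + j) / N (k + j - 1))) ≤ C * k / (M k / M (k - 1)))
    (ωM ωN : ℝ → ℝ)
    (hωM : ∀ t > (0 : ℝ), ωM t = sSup {y | ∃ k : ℕ, y = Real.log (t ^ k / M k)})
    (hωN : ∀ t > (0 : ℝ), ωN t = sSup {y | ∃ k : ℕ, y = Real.log (t ^ k / N k)}) :
    ∃ C' > (0 : ℝ), ∀ t > (0 : ℝ),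
      (∫ u in Set.Ioi (1 : ℝ), ωN (t * u) / u ^ 2) ≤ C' * ωM t + C' := by
  classical
  set E := Real.exp 1 with hE
  have hEpos : 0 < E := Real.exp_pos 1
  have hE1 : 1 ≤ E := Real.one_le_exp zero_le_one
  have hlogE : Real.log E = 1 := Real.log_exp 1
  set p : ℕ → ℝ := fun j => M (j + 1) / M j with hp
  set q : ℕ → ℝ := fun j => N (j + 1) / N j with hq
  have hppos : ∀ j, 0 < p j := fun j => div_pos (hMpos _) (hMpos _)
  have hqpos : ∀ j, 0 < q j := fun j => div_pos (hNpos _) (hNpos _)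
  have hpq : ∀ j, p j ≤ q j := by
    intro j
    have h := hμν (j + 1) (Nat.le_add_left 1 j)
    simpa using h
  have hpmono : Monotone p := by
    apply monotone_nat_of_le_succ
    intro j
    have h := hMlc (j + 1) (Nat.le_add_left 1 j)
    simpa using h
  have hqmono : Monotone q := by
    apply monotone_nat_of_le_succ
    intro j
    have h := hNlc (j + 1) (Nat.le_add_left 1 j)
    simpa using h
  have hMprod : ∀ k, M k = ∏ j ∈ Finset.range k, p j := by
    intro k
    induction k with
    | zero => simpa using hM0
    | succ n ih =>
      rw [Finset.prod_range_succ, ← ih, hp]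
      show M (n + 1) = M n * (M (n + 1) / M n)
      rw [mul_comm]
      exact (div_mul_cancel₀ _ (ne_of_gt (hMpos n))).symm
  have hNprod : ∀ k, N k = ∏ j ∈ Finset.range k, q j := by
    intro k
    induction k with
    | zero => simpa using hN0
    | succ n ih =>
      rw [Finset.prod_range_succ, ← ih, hq]
      show N (n + 1) = N n * (N (n + 1) / N n)
      rw [mul_comm]
      exact (div_mul_cancel₀ _ (ne_of_gt (hNpos n))).symm
  have hlogM : ∀ s : ℝ, 0 < s → ∀ k,
      Real.log (s ^ k / M k) = ∑ j ∈ Finset.range k, Real.log (s / p j) := by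
    intro s hs k
    have h1 : s ^ k / M k = ∏ j ∈ Finset.range k, (s / p j) := by
      rw [Finset.prod_div_distrib, Finset.prod_const, Finset.card_range, ← hMprod]
    rw [h1, Real.log_prod]
    intro j _
    exact ne_of_gt (div_pos hs (hppos j))
  have hlogN : ∀ s : ℝ, 0 < s → ∀ k,
      Real.log (s ^ k / N k) = ∑ j ∈ Finset.range k, Real.log (s / q j) := by
    intro s hs k
    have h1 : s ^ k / N k = ∏ j ∈ Finset.range k, (s / q j) := by
      rw [Finset.prod_div_distrib, Finset.prod_const, Finset.card_range, ← hNprod]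
    rw [h1, Real.log_prod]
    intro j _
    exact ne_of_gt (div_pos hs (hqpos j))
  have hptend : Tendsto p atTop atTop := by
    apply tendsto_atTop_mono _ (hMroot.comp (tendsto_add_atTop_nat 1))
    intro j
    show M (j + 1) ^ (1 / ((j + 1 : ℕ) : ℝ)) ≤ p j
    have hj0 : (0:ℝ) < ((j + 1 : ℕ) : ℝ) := by positivity
    have hMle : M (j + 1) ≤ p j ^ (j + 1) := by
      rw [hMprod (j + 1)]
      calc ∏ i ∈ Finset.range (j + 1), p i
          ≤ ∏ i ∈ Finset.range (j + 1), p j := by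
            apply Finset.prod_le_prod (fun i _ => (hppos i).le)
            intro i hi
            exact hpmono (Nat.lt_succ_iff.1 (Finset.mem_range.1 hi))
        _ = p j ^ (j + 1) := by rw [Finset.prod_const, Finset.card_range]
    have h1 : M (j + 1) ^ (1 / ((j + 1 : ℕ) : ℝ)) ≤ (p j ^ (j + 1)) ^ (1 / ((j + 1 : ℕ) : ℝ)) :=
      Real.rpow_le_rpow (hMpos _).le hMle (by positivity)
    refine h1.trans (le_of_eq ?_)
    rw [← Real.rpow_natCast (p j) (j + 1), ← Real.rpow_mul (hppos j).le]
    rw [mul_one_div, div_self (ne_of_gt hj0), Real.rpow_one]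
  have hqtend : Tendsto q atTop atTop := tendsto_atTop_mono hpq hptend
  -- summability of positive log parts
  have hsummax : ∀ (r : ℕ → ℝ), (∀ j, 0 < r j) → Tendsto r atTop atTop → ∀ s : ℝ, 0 < s →
      Summable (fun j => max 0 (Real.log (s / r j))) := by
    intro r hrpos hrt s hs
    obtain ⟨J, hJ⟩ := eventually_atTop.1 (hrt.eventually_ge_atTop s)
    apply summable_of_ne_finset_zero (s := Finset.range J)
    intro j hj
    have hsj : s ≤ r j := hJ j (by simpa using hj)
    have : Real.log (s / r j) ≤ 0 :=
      Real.log_nonpos (div_pos hs (hrpos j)).le ((div_le_one (hrpos j)).2 hsj)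
    exact max_eq_left this
  have hsumM : ∀ s : ℝ, 0 < s → Summable (fun j => max 0 (Real.log (s / p j))) :=
    hsummax p hppos hptend
  have hsumN : ∀ s : ℝ, 0 < s → Summable (fun j => max 0 (Real.log (s / q j))) :=
    hsummax q hqpos hqtend
  have helemN : ∀ s : ℝ, 0 < s → ∀ k : ℕ,
      Real.log (s ^ k / N k) ≤ ∑' j, max 0 (Real.log (s / q j)) := by
    intro s hs k
    rw [hlogN s hs k]
    calc ∑ j ∈ Finset.range k, Real.log (s / q j)
        ≤ ∑ j ∈ Finset.range k, max 0 (Real.log (s / q j)) :=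
          Finset.sum_le_sum fun j _ => le_max_right _ _
      _ ≤ ∑' j, max 0 (Real.log (s / q j)) :=
          (hsumN s hs).sum_le_tsum (Finset.range k) (fun j _ => le_max_left _ _)
  have helemM : ∀ s : ℝ, 0 < s → ∀ k : ℕ,
      Real.log (s ^ k / M k) ≤ ∑' j, max 0 (Real.log (s / p j)) := by
    intro s hs k
    rw [hlogM s hs k]
    calc ∑ j ∈ Finset.range k, Real.log (s / p j)
        ≤ ∑ j ∈ Finset.range k, max 0 (Real.log (s / p j)) :=
          Finset.sum_le_sum fun j _ => le_max_right _ _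
      _ ≤ ∑' j, max 0 (Real.log (s / p j)) :=
          (hsumM s hs).sum_le_tsum (Finset.range k) (fun j _ => le_max_left _ _)
  have hbddN : ∀ s : ℝ, 0 < s → BddAbove {y | ∃ k : ℕ, y = Real.log (s ^ k / N k)} := by
    intro s hs
    exact ⟨_, fun y hy => by obtain ⟨k, rfl⟩ := hy; exact helemN s hs k⟩
  have hbddM : ∀ s : ℝ, 0 < s → BddAbove {y | ∃ k : ℕ, y = Real.log (s ^ k / M k)} := by
    intro s hs
    exact ⟨_, fun y hy => by obtain ⟨k, rfl⟩ := hy; exact helemM s hs k⟩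
  have hωNle : ∀ s : ℝ, 0 < s → ωN s ≤ ∑' j, max 0 (Real.log (s / q j)) := by
    intro s hs
    rw [hωN s hs]
    exact csSup_le ⟨_, ⟨0, rfl⟩⟩ (fun y hy => by obtain ⟨k, rfl⟩ := hy; exact helemN s hs k)
  have hωMge : ∀ s : ℝ, 0 < s → ∀ k : ℕ, Real.log (s ^ k / M k) ≤ ωM s := by
    intro s hs k
    rw [hωM s hs]
    exact le_csSup (hbddM s hs) ⟨k, rfl⟩
  have hωNge : ∀ s : ℝ, 0 < s → ∀ k : ℕ, Real.log (s ^ k / N k) ≤ ωN s := by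
    intro s hs k
    rw [hωN s hs]
    exact le_csSup (hbddN s hs) ⟨k, rfl⟩
  have hωMnn : ∀ s : ℝ, 0 < s → 0 ≤ ωM s := by
    intro s hs
    have h := hωMge s hs 0
    simpa [hM0] using h
  have hωNnn : ∀ s : ℝ, 0 < s → 0 ≤ ωN s := by
    intro s hs
    have h := hωNge s hs 0
    simpa [hN0] using h
  refine ⟨2 + C * E, by positivity, ?_⟩
  intro t ht
  by_cases hInt : IntegrableOn (fun u => ωN (t * u) / u ^ 2) (Set.Ioi 1) volume
  · by_cases hSum : Summable (fun j => (q j)⁻¹)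
    · -- main estimate
      have hex1 : ∃ k, t < E * p k := by
        obtain ⟨k, hk⟩ := (hptend.eventually_gt_atTop (t / E)).exists
        refine ⟨k, ?_⟩
        rw [div_lt_iff₀ hEpos] at hk
        linarith [hk]
      obtain ⟨m, hmspec, hmmin⟩ : ∃ m : ℕ, t < E * p m ∧ ∀ j, j < m → E * p j ≤ t :=
        ⟨Nat.find hex1, Nat.find_spec hex1, fun j hj => not_lt.1 (Nat.find_min hex1 hj)⟩
      have hm_le : (m : ℝ) ≤ ωM t := by
        calc (m : ℝ) = ∑ _j ∈ Finset.range m, (1:ℝ) := by simp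
          _ ≤ ∑ j ∈ Finset.range m, Real.log (t / p j) := by
              apply Finset.sum_le_sum
              intro j hj
              have hj' := hmmin j (Finset.mem_range.1 hj)
              have hEle : E ≤ t / p j := (le_div_iff₀ (hppos j)).2 (by linarith)
              calc (1:ℝ) = Real.log E := hlogE.symm
                _ ≤ Real.log (t / p j) := Real.log_le_log hEpos hEle
          _ = Real.log (t ^ m / M m) := (hlogM t ht m).symm
          _ ≤ ωM t := hωMge t ht m
      have htail' : ∑' j : ℕ, (q (j + m))⁻¹ ≤ C * ((m:ℝ) + 1) / p m := by
        have h := htail (m + 1) (Nat.le_add_left 1 m)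
        have e1 : ∀ j : ℕ, 1 / (N (m + 1 + j) / N (m + 1 + j - 1)) = (q (j + m))⁻¹ := by
          intro j
          have e2 : m + 1 + j = (j + m) + 1 := by omega
          have e3 : m + 1 + j - 1 = j + m := by omega
          rw [e3, e2, one_div]
        rw [tsum_congr e1] at h
        have e4 : M (m + 1) / M (m + 1 - 1) = p m := by
          have e5 : m + 1 - 1 = m := by omega
          rw [e5, hp]
        rw [e4] at h
        have e5 : ((m + 1 : ℕ) : ℝ) = (m : ℝ) + 1 := by push_cast; ring
        rw [e5] at h
        exact h
      have hminnn : ∀ j : ℕ, 0 ≤ min 1 (t / q j) :=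
        fun j => le_min zero_le_one (div_pos ht (hqpos j)).le
      have hminle : ∀ j : ℕ, min 1 (t / q j) ≤ t * (q j)⁻¹ :=
        fun j => (min_le_right _ _).trans_eq (div_eq_mul_inv t (q j))
      have hminsum : Summable (fun j => min 1 (t / q j)) :=
        Summable.of_nonneg_of_le hminnn hminle (hSum.mul_left t)
      have hshift : Summable (fun j => min 1 (t / q (j + m))) :=
        (summable_nat_add_iff (f := fun j => min 1 (t / q j)) m).2 hminsum
      have hshift2 : Summable (fun j : ℕ => t * (q (j + m))⁻¹) :=
        ((summable_nat_add_iff (f := fun j => (q j)⁻¹) m).2 hSum).mul_left t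
      have hSmin : ∑' j, min 1 (t / q j) ≤ (m:ℝ) + E * C * ((m:ℝ) + 1) := by
        rw [← Summable.sum_add_tsum_nat_add (f := fun j => min 1 (t / q j)) m hminsum]
        have part1 : ∑ j ∈ Finset.range m, min 1 (t / q j) ≤ (m:ℝ) := by
          calc ∑ j ∈ Finset.range m, min 1 (t / q j) ≤ ∑ _j ∈ Finset.range m, (1:ℝ) :=
              Finset.sum_le_sum fun j _ => min_le_left _ _
            _ = (m:ℝ) := by simp
        have part2 : ∑' j, min 1 (t / q (j + m)) ≤ E * C * ((m:ℝ) + 1) := by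
          calc ∑' j, min 1 (t / q (j + m)) ≤ ∑' j : ℕ, t * (q (j + m))⁻¹ :=
              Summable.tsum_le_tsum (fun j => hminle (j + m)) hshift hshift2
            _ = t * ∑' j : ℕ, (q (j + m))⁻¹ := tsum_mul_left
            _ ≤ t * (C * ((m:ℝ) + 1) / p m) := mul_le_mul_of_nonneg_left htail' ht.le
            _ = (C * ((m:ℝ) + 1)) * (t / p m) := by ring
            _ ≤ (C * ((m:ℝ) + 1)) * E := by
                apply mul_le_mul_of_nonneg_left _ (by positivity)
                exact (div_le_iff₀ (hppos m)).2 (by linarith)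
            _ = E * C * ((m:ℝ) + 1) := by ring
        linarith
      have hSmax : ∑' j, max 0 (Real.log (t / q j)) ≤ ωM t := by
        have h1 : ∑' j, max 0 (Real.log (t / q j)) ≤ ∑' j, max 0 (Real.log (t / p j)) := by
          apply Summable.tsum_le_tsum _ (hsumN t ht) (hsumM t ht)
          intro j
          apply max_le_max le_rfl
          apply Real.log_le_log (div_pos ht (hqpos j))
          exact div_le_div_of_nonneg_left ht.le (hppos j) (hpq j)
        refine h1.trans ?_
        have hex2 : ∃ k, t < p k := (hptend.eventually_gt_atTop t).exists
        obtain ⟨m2, hm2spec, hm2min⟩ : ∃ m2 : ℕ, t < p m2 ∧ ∀ j, j < m2 → p j ≤ t :=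
          ⟨Nat.find hex2, Nat.find_spec hex2, fun j hj => not_lt.1 (Nat.find_min hex2 hj)⟩
        have h2 : ∑' j, max 0 (Real.log (t / p j)) = ∑ j ∈ Finset.range m2, max 0 (Real.log (t / p j)) := by
          apply tsum_eq_sum
          intro j hj
          have hj' : m2 ≤ j := by simpa using hj
          have hpj : t < p j := lt_of_lt_of_le hm2spec (hpmono hj')
          exact max_eq_left (Real.log_nonpos (div_pos ht (hppos j)).le
            ((div_le_one (hppos j)).2 hpj.le))
        have h3 : ∑ j ∈ Finset.range m2, max 0 (Real.log (t / p j))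
            = ∑ j ∈ Finset.range m2, Real.log (t / p j) := by
          apply Finset.sum_congr rfl
          intro j hj
          exact max_eq_right (Real.log_nonneg
            ((one_le_div (hppos j)).2 (hm2min j (Finset.mem_range.1 hj))))
        rw [h2, h3, ← hlogM t ht m2]
        exact hωMge t ht m2
      -- per-term integrals
      have haux : ∀ j : ℕ, IntegrableOn (fun u => max 0 (Real.log (t / q j * u)) / u ^ 2) (Set.Ioi 1)
          ∧ ∫ u in Set.Ioi 1, max 0 (Real.log (t / q j * u)) / u ^ 2
              ≤ max 0 (Real.log (t / q j)) + min 1 (t / q j) :=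
        fun j => aux1 (t / q j) (div_pos ht (hqpos j))
      have hbnn : ∀ j : ℕ, 0 ≤ max 0 (Real.log (t / q j)) + min 1 (t / q j) :=
        fun j => add_nonneg (le_max_left _ _) (hminnn j)
      have hbsummable : Summable (fun j => max 0 (Real.log (t / q j)) + min 1 (t / q j)) :=
        (hsumN t ht).add hminsum
      have hbsum_le : ∑' j, (max 0 (Real.log (t / q j)) + min 1 (t / q j))
          ≤ (2 + C * E) * ωM t + (2 + C * E) := by
        rw [Summable.tsum_add (hsumN t ht) hminsum]
        have h0 := hωMnn t ht
        nlinarith [mul_pos hC hEpos, mul_nonneg (mul_pos hC hEpos).le h0]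
      have hfjmeas : ∀ j : ℕ, Measurable (fun u : ℝ => ENNReal.ofReal (max 0 (Real.log (t / q j * u)) / u ^ 2)) := by
        intro j
        apply Measurable.ennreal_ofReal
        exact (measurable_const.max (Real.measurable_log.comp (measurable_id.const_mul (t / q j)))).div
          (measurable_id.pow_const 2)
      have hptwise : ∀ u ∈ Set.Ioi (1:ℝ), ENNReal.ofReal (ωN (t * u) / u ^ 2)
          ≤ ∑' j, ENNReal.ofReal (max 0 (Real.log (t / q j * u)) / u ^ 2) := by
        intro u hu
        have hu0 : (0:ℝ) < u := lt_trans one_pos hu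
        have htu : 0 < t * u := mul_pos ht hu0
        have hrw : ∀ j : ℕ, t * u / q j = t / q j * u := fun j => (div_mul_eq_mul_div t (q j) u).symm
        have h1 : ωN (t * u) ≤ ∑' j, max 0 (Real.log (t / q j * u)) := by
          have := hωNle (t * u) htu
          simpa only [hrw] using this
        have hsum' : Summable (fun j => max 0 (Real.log (t / q j * u))) := by
          have := hsumN (t * u) htu
          simpa only [hrw] using this
        have h2 : ωN (t * u) / u ^ 2 ≤ (∑' j, max 0 (Real.log (t / q j * u))) / u ^ 2 := by
          gcongr
        calc ENNReal.ofReal (ωN (t * u) / u ^ 2)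
            ≤ ENNReal.ofReal ((∑' j, max 0 (Real.log (t / q j * u))) / u ^ 2) :=
              ENNReal.ofReal_le_ofReal h2
          _ = ENNReal.ofReal (∑' j, max 0 (Real.log (t / q j * u)) / u ^ 2) := by
              rw [tsum_div_const]
          _ = ∑' j, ENNReal.ofReal (max 0 (Real.log (t / q j * u)) / u ^ 2) :=
              ENNReal.ofReal_tsum_of_nonneg (fun j => by positivity) (hsum'.div_const _)
      have hlchain : (∫⁻ u in Set.Ioi (1:ℝ), ENNReal.ofReal (ωN (t * u) / u ^ 2))
          ≤ ENNReal.ofReal ((2 + C * E) * ωM t + (2 + C * E)) := by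
        calc (∫⁻ u in Set.Ioi (1:ℝ), ENNReal.ofReal (ωN (t * u) / u ^ 2))
            ≤ ∫⁻ u in Set.Ioi (1:ℝ), ∑' j, ENNReal.ofReal (max 0 (Real.log (t / q j * u)) / u ^ 2) := by
              exact lintegral_mono_ae ((ae_restrict_iff' measurableSet_Ioi).2
                (Eventually.of_forall hptwise))
          _ = ∑' j, ∫⁻ u in Set.Ioi (1:ℝ), ENNReal.ofReal (max 0 (Real.log (t / q j * u)) / u ^ 2) :=
              lintegral_tsum fun j => (hfjmeas j).aemeasurable
          _ = ∑' j, ENNReal.ofReal (∫ u in Set.Ioi (1:ℝ), max 0 (Real.log (t / q j * u)) / u ^ 2) := by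
              refine tsum_congr fun j => ?_
              rw [ofReal_integral_eq_lintegral_ofReal (haux j).1
                (Eventually.of_forall fun u => by positivity)]
          _ ≤ ∑' j, ENNReal.ofReal (max 0 (Real.log (t / q j)) + min 1 (t / q j)) :=
              ENNReal.tsum_le_tsum fun j => ENNReal.ofReal_le_ofReal (haux j).2
          _ = ENNReal.ofReal (∑' j, (max 0 (Real.log (t / q j)) + min 1 (t / q j))) :=
              (ENNReal.ofReal_tsum_of_nonneg hbnn hbsummable).symm
          _ ≤ _ := ENNReal.ofReal_le_ofReal hbsum_le
      have hnn : 0 ≤ᵐ[volume.restrict (Set.Ioi (1:ℝ))] fun u => ωN (t * u) / u ^ 2 :=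
        (ae_restrict_iff' measurableSet_Ioi).2 (Eventually.of_forall fun u hu =>
          div_nonneg (hωNnn _ (mul_pos ht (lt_trans one_pos hu))) (sq_nonneg u))
      rw [integral_eq_lintegral_of_nonneg_ae hnn hInt.aestronglyMeasurable]
      apply ENNReal.toReal_le_of_le_ofReal _ hlchain
      have h0 := hωMnn t ht
      nlinarith [mul_pos hC hEpos, mul_nonneg (mul_pos hC hEpos).le h0]
    · -- divergence: contradiction with integrability
      exfalso
      set c : ℕ → ℝ := fun j => max 1 (E * q j / t) with hcdef
      have hc1 : ∀ j, (1:ℝ) ≤ c j := fun j => le_max_left _ _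
      have hcpos : ∀ j, (0:ℝ) < c j := fun j => lt_of_lt_of_le one_pos (hc1 j)
      have hcmono : Monotone c := by
        intro i j hij
        exact max_le_max le_rfl (by gcongr; exact hqmono hij)
      have hctend : Tendsto c atTop atTop := by
        apply tendsto_atTop_mono (fun j => le_max_right 1 (E * q j / t))
        exact Tendsto.atTop_div_const ht (hqtend.const_mul_atTop hEpos)
      have hfin : (∫⁻ u in Set.Ioi (1:ℝ), ENNReal.ofReal (ωN (t * u) / u ^ 2)) < ⊤ := by
        refine lt_of_le_of_lt (lintegral_mono fun u => ?_) hInt.2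
        exact Real.ofReal_le_enorm _
      have hmeas1 : Measurable (fun u : ℝ => ENNReal.ofReal (1 / u ^ 2)) :=
        (measurable_const.div (measurable_id.pow_const 2)).ennreal_ofReal
      have hKey : ∀ K : ℕ, ∑ j ∈ Finset.range K, ENNReal.ofReal (1 / c j)
          ≤ ∫⁻ u in Set.Ioi (1:ℝ), ENNReal.ofReal (ωN (t * u) / u ^ 2) := by
        intro K
        have hpt : ∀ u ∈ Set.Ioi (1:ℝ),
            ∑ j ∈ Finset.range K, (Set.Ioi (c j)).indicator (fun v => ENNReal.ofReal (1 / v ^ 2)) u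
              ≤ ENNReal.ofReal (ωN (t * u) / u ^ 2) := by
          intro u hu
          have hu1 : (1:ℝ) < u := hu
          have hu0 : (0:ℝ) < u := lt_trans one_pos hu1
          have htu : 0 < t * u := mul_pos ht hu0
          have hex3 : ∃ j, u ≤ c j := (hctend.eventually_ge_atTop u).exists
          obtain ⟨n, hnspec, hnmin⟩ : ∃ n : ℕ, u ≤ c n ∧ ∀ j, j < n → c j < u :=
            ⟨Nat.find hex3, Nat.find_spec hex3, fun j hj => lt_of_not_ge (Nat.find_min hex3 hj)⟩
          have hind : ∀ j : ℕ, (Set.Ioi (c j)).indicator (fun v => ENNReal.ofReal (1 / v ^ 2)) u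
              = if j < n then ENNReal.ofReal (1 / u ^ 2) else 0 := by
            intro j
            by_cases hj : j < n
            · rw [if_pos hj]
              exact Set.indicator_of_mem (hnmin j hj) _
            · rw [if_neg hj]
              apply Set.indicator_of_notMem
              simp only [Set.mem_Ioi, not_lt]
              exact hnspec.trans (hcmono (not_lt.1 hj))
          rw [Finset.sum_congr rfl fun j _ => hind j]
          have hfilter : (Finset.range K).filter (fun j => j < n) = Finset.range (min K n) := by
            ext j
            simp only [Finset.mem_filter, Finset.mem_range, Nat.lt_min]
          have hsum_ite : (∑ j ∈ Finset.range K, if j < n then ENNReal.ofReal (1 / u ^ 2) else 0)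
              = (min K n) • ENNReal.ofReal (1 / u ^ 2) := by
            rw [Finset.sum_ite, Finset.sum_const, Finset.sum_const, smul_zero, add_zero, hfilter,
              Finset.card_range]
          rw [hsum_ite]
          have hkn : ∀ j, j < min K n → E * q j < t * u := by
            intro j hj
            have hcj := hnmin j (lt_of_lt_of_le hj (min_le_right K n))
            have h3 : E * q j / t ≤ c j := le_max_right _ _
            have h4 : E * q j / t < u := lt_of_le_of_lt h3 hcj
            rw [div_lt_iff₀ ht] at h4
            linarith
          have h5 : ((min K n : ℕ) : ℝ) ≤ ωN (t * u) := by
            calc ((min K n : ℕ) : ℝ) = ∑ _j ∈ Finset.range (min K n), (1:ℝ) := by simp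
              _ ≤ ∑ j ∈ Finset.range (min K n), Real.log (t * u / q j) := by
                  apply Finset.sum_le_sum
                  intro j hj
                  have h6 := hkn j (Finset.mem_range.1 hj)
                  have hEle : E ≤ t * u / q j := (le_div_iff₀ (hqpos j)).2 (by linarith)
                  calc (1:ℝ) = Real.log E := hlogE.symm
                    _ ≤ _ := Real.log_le_log hEpos hEle
              _ = Real.log ((t * u) ^ (min K n) / N (min K n)) := (hlogN (t*u) htu (min K n)).symm
              _ ≤ ωN (t * u) := hωNge (t*u) htu (min K n)
          rw [nsmul_eq_mul]
          have h11 : ((min K n : ℕ) : ENNReal) ≤ ENNReal.ofReal (ωN (t * u)) := by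
            rw [← ENNReal.ofReal_natCast]
            exact ENNReal.ofReal_le_ofReal h5
          have h12 : ENNReal.ofReal (ωN (t * u) / u ^ 2)
              = ENNReal.ofReal (ωN (t * u)) * ENNReal.ofReal (1 / u ^ 2) := by
            rw [← ENNReal.ofReal_mul (hωNnn _ htu), mul_one_div]
          rw [h12]
          exact mul_le_mul_left h11 _
        calc ∑ j ∈ Finset.range K, ENNReal.ofReal (1 / c j)
            = ∑ j ∈ Finset.range K, ∫⁻ u in Set.Ioi (1:ℝ),
                (Set.Ioi (c j)).indicator (fun v => ENNReal.ofReal (1 / v ^ 2)) u := by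
              refine Finset.sum_congr rfl fun j _ => ?_
              rw [lintegral_indicator measurableSet_Ioi, Measure.restrict_restrict measurableSet_Ioi,
                Set.Ioi_inter_Ioi, max_eq_left (hc1 j), aux_invsq (c j) (hcpos j)]
          _ = ∫⁻ u in Set.Ioi (1:ℝ), ∑ j ∈ Finset.range K,
                (Set.Ioi (c j)).indicator (fun v => ENNReal.ofReal (1 / v ^ 2)) u :=
              (lintegral_finset_sum _ fun j _ => (hmeas1.indicator measurableSet_Ioi)).symm
          _ ≤ ∫⁻ u in Set.Ioi (1:ℝ), ENNReal.ofReal (ωN (t * u) / u ^ 2) :=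
              lintegral_mono_ae ((ae_restrict_iff' measurableSet_Ioi).2 (Eventually.of_forall hpt))
      have htsum : (∑' j, ENNReal.ofReal (1 / c j)) < ⊤ :=
        lt_of_le_of_lt (ENNReal.tsum_le_of_sum_range_le hKey) hfin
      have hsummable' : Summable (fun j => 1 / c j) := by
        have h7 := ENNReal.summable_toReal htsum.ne
        refine h7.congr fun j => ?_
        rw [ENNReal.toReal_ofReal (by positivity)]
      obtain ⟨J, hJ⟩ := eventually_atTop.1 (hqtend.eventually_ge_atTop (t / E))
      have hq' : Summable (fun j => (q (j + J))⁻¹) := by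
        apply Summable.of_nonneg_of_le (fun j => inv_nonneg.2 (hqpos _).le) (fun j => ?_)
          (((summable_nat_add_iff (f := fun j => 1 / c j) J).2 hsummable').mul_left (E / t))
        have hqJ : t / E ≤ q (j + J) := hJ (j + J) (by omega)
        have hcj : c (j + J) = E * q (j + J) / t := by
          apply max_eq_right
          rw [div_le_iff₀ hEpos] at hqJ
          rw [le_div_iff₀ ht]
          linarith
        rw [hcj]
        have h8 := (hqpos (j + J)).ne'
        have h9 := ht.ne'
        have h10 := hEpos.ne'
        apply le_of_eq
        field_simp
      exact hSum ((summable_nat_add_iff (f := fun j => (q j)⁻¹) J).1 hq')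
  · rw [integral_undef hInt]
    have h1 := hωMnn t ht
    have h2 : 0 ≤ (2 + C * E) * ωM t := mul_nonneg (by positivity) h1
    nlinarith [mul_pos hC hEpos]
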